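/- Let H be a finite simple graph, p a prime, Γ ⊆ Aut(H) a p-group, Φ a graph property, and c a nonnegative integer with c < ℓ(H). Suppose that Φ evaluates to 1 on the empty edge-subgraph of H and that Φ(F) = 0 for every fixed point F ∈ fp(Γ,H) with level ℓ(F) > ℓ(H) − c. Then there exists a fixed point S ∈ fp(Γ,H) with χ̂(Φ,S) ≢ 0 (mod p) and ℓ(S) ≥ c. -/

import Mathlib

open scoped Classical

/-!
Statement 6: Let `Γ ⊆ Aut(H)` be a `p`-group, `Φ` a graph property, and `c < ℓ(H)` a
nonnegative integer. If `Φ(∅) = 1` (on the empty edge-subgraph of `H`) and `Φ(F) = 0`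
for every fixed point `F` with `ℓ(F) > ℓ(H) − c`, then there is a fixed point `S` with
`χ̂(Φ,S) ≢ 0 (mod p)` and `ℓ(S) ≥ c`.
-/

/-- The orbit of an edge `e` under a subgroup `Γ` of permutations of the vertices. -/
def EdgeOrbit {V : Type*} (Γ : Subgroup (Equiv.Perm V)) (e : Sym2 V) : Set (Sym2 V) :=
  {f | ∃ g ∈ Γ, f = Sym2.map (⇑g) e}

/-- The set of orbits `E(H)/Γ`. -/
def EdgeOrbits {V : Type*} (Γ : Subgroup (Equiv.Perm V)) (H : SimpleGraph V) :
    Set (Set (Sym2 V)) :=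
  {O | ∃ e ∈ H.edgeSet, O = EdgeOrbit Γ e}

/-- `A` is a fixed point of `Γ` in `H`. -/
def IsFixedPoint {V : Type*} (Γ : Subgroup (Equiv.Perm V)) (H A : SimpleGraph V) : Prop :=
  A ≤ H ∧ ∀ g ∈ Γ, Sym2.map (⇑g) '' A.edgeSet = A.edgeSet

/-- The level `ℓ(A)` of a fixed point `A`: the number of orbits of `E(H)/Γ`
contained in `E(A)`. -/
noncomputable def level {V : Type*} (Γ : Subgroup (Equiv.Perm V)) (H A : SimpleGraph V) : ℕ :=
  {O | O ∈ EdgeOrbits Γ H ∧ O ⊆ A.edgeSet}.ncard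

/-- The alternating enumerator `χ̂(Φ,H) = Σ_{S ⊆ E(H)} Φ(H[S])·(−1)^{|S|}`. -/
noncomputable def altEnum {V : Type*} [Fintype V] [DecidableEq V]
    (Φ : SimpleGraph V → Prop) (H : SimpleGraph V) : ℤ :=
  ∑ S ∈ H.edgeFinset.powerset,
    if Φ (SimpleGraph.fromEdgeSet (S : Set (Sym2 V))) then (-1 : ℤ) ^ S.card else 0

section Auxiliary

open scoped Pointwise

/-! ### Generic combinatorial lemmas -/

lemma insert_powerset_sum {ι M : Type*} [DecidableEq ι] [AddCommMonoid M]
    (u : Finset ι → M) {i : ι} {B : Finset ι} (hi : i ∉ B) :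
    ∑ A ∈ (insert i B).powerset, u A
      = ∑ A ∈ B.powerset, u A + ∑ A ∈ B.powerset, u (insert i A) := by
  rw [Finset.powerset_insert, Finset.sum_union, Finset.sum_image]
  · intro A hA A' hA' h
    rw [Finset.mem_coe, Finset.mem_powerset] at hA hA'
    have hiA : i ∉ A := fun hmem => hi (hA hmem)
    have hiA' : i ∉ A' := fun hmem => hi (hA' hmem)
    rw [← Finset.erase_insert hiA, ← Finset.erase_insert hiA', h]
  · rw [Finset.disjoint_left]
    intro A hA hA'
    rw [Finset.mem_powerset] at hA
    obtain ⟨A', hA', rfl⟩ := Finset.mem_image.mp hA'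
    exact hi (hA (Finset.mem_insert_self i A'))

lemma const_of_step {ι M : Type*} [DecidableEq ι] [AddCommMonoid M]
    (E : Finset ι) (u : Finset ι → M)
    (hz : ∀ i ∈ E, ∀ B ⊆ E, i ∉ B → ∑ A ∈ B.powerset, u (insert i A) = 0) :
    ∀ B ⊆ E, ∑ A ∈ B.powerset, u A = ∑ A ∈ E.powerset, u A := by
  suffices h : ∀ n (B : Finset ι), B ⊆ E → (E \ B).card = n →
      ∑ A ∈ B.powerset, u A = ∑ A ∈ E.powerset, u A by
    intro B hB; exact h _ B hB rfl
  intro n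
  induction n with
  | zero =>
    intro B hB h0
    have hemp : E \ B = ∅ := Finset.card_eq_zero.mp h0
    have hEB : E = B := by
      apply Finset.Subset.antisymm _ hB
      intro x hx
      by_contra hxB
      have : x ∈ E \ B := Finset.mem_sdiff.mpr ⟨hx, hxB⟩
      simp [hemp] at this
    rw [hEB]
  | succ n ih =>
    intro B hB hcard
    have hne : (E \ B).Nonempty := Finset.card_pos.mp (by omega)
    obtain ⟨i, hi⟩ := hne
    rw [Finset.mem_sdiff] at hi
    have hstep : ∑ A ∈ (insert i B).powerset, u A = ∑ A ∈ B.powerset, u A := by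
      rw [insert_powerset_sum u hi.2, hz i hi.1 B hB hi.2, add_zero]
    rw [← hstep]
    apply ih
    · exact Finset.insert_subset hi.1 hB
    · have : E \ insert i B = (E \ B).erase i := by
        ext x; simp [Finset.mem_sdiff, Finset.mem_erase, Finset.mem_insert]; tauto
      rw [this, Finset.card_erase_of_mem (Finset.mem_sdiff.mpr hi), hcard]
      rfl

lemma polyZero {ι M : Type*} [DecidableEq ι] [AddCommMonoid M] :
    ∀ (d : ℕ) (E : Finset ι) (u : Finset ι → M),
      (∀ A ⊆ E, d < A.card → u A = 0) →
      (∀ B ⊆ E, E.card - d ≤ B.card → ∑ A ∈ B.powerset, u A = 0) →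
      ∀ B ⊆ E, ∑ A ∈ B.powerset, u A = 0 := by
  intro d
  induction d with
  | zero =>
    intro E u hs hv B hB
    have hz : ∀ i ∈ E, ∀ B ⊆ E, i ∉ B → ∑ A ∈ B.powerset, u (insert i A) = 0 := by
      intro i hiE B' hB' hiB'
      apply Finset.sum_eq_zero
      intro A hA
      rw [Finset.mem_powerset] at hA
      apply hs
      · exact Finset.insert_subset hiE (hA.trans hB')
      · simp [Finset.card_insert_of_notMem (fun h => hiB' (hA h))]
    rw [const_of_step E u hz B hB]
    exact hv E Finset.Subset.rfl (Nat.sub_le _ _)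
  | succ d ih =>
    intro E u hs hv B hB
    have hz : ∀ i ∈ E, ∀ B ⊆ E, i ∉ B → ∑ A ∈ B.powerset, u (insert i A) = 0 := by
      intro i hiE B' hB' hiB'
      have hB'e : B' ⊆ E.erase i := fun x hx =>
        Finset.mem_erase.mpr ⟨fun h => hiB' (h ▸ hx), hB' hx⟩
      refine ih (E.erase i) (fun A => u (insert i A)) ?_ ?_ B' hB'e
      · intro A hA hAcard
        apply hs
        · exact Finset.insert_subset hiE (hA.trans (Finset.erase_subset i E))
        · have hiA : i ∉ A := fun h => (Finset.mem_erase.mp (hA h)).1 rfl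
          rw [Finset.card_insert_of_notMem hiA]; omega
      · intro C hC hCcard
        have hiC : i ∉ C := fun h => (Finset.mem_erase.mp (hC h)).1 rfl
        have hCE : C ⊆ E := hC.trans (Finset.erase_subset i E)
        have h1 : ∑ A ∈ (insert i C).powerset, u A = 0 := by
          apply hv _ (Finset.insert_subset hiE hCE)
          rw [Finset.card_erase_of_mem hiE] at hCcard
          have := Finset.card_insert_of_notMem hiC
          omega
        have h2 : ∑ A ∈ C.powerset, u A = 0 := by
          apply hv _ hCE
          rw [Finset.card_erase_of_mem hiE] at hCcard
          omega
        have := insert_powerset_sum u hiC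
        rw [h1, h2] at this
        exact (by simpa using this.symm)
    rw [const_of_step E u hz B hB]
    exact hv E Finset.Subset.rfl (Nat.sub_le _ _)

lemma moebius {ι M : Type*} [DecidableEq ι] [CommRing M] :
    ∀ (C : Finset ι) (m : Finset ι → M),
      ∑ A ∈ C.powerset, (-1 : M) ^ A.card * ∑ B ∈ A.powerset, m B
        = (-1 : M) ^ C.card * m C := by
  intro C
  induction C using Finset.induction_on with
  | empty => intro m; simp
  | @insert i C' hi ih =>
    intro m
    rw [insert_powerset_sum (fun A => (-1 : M) ^ A.card * ∑ B ∈ A.powerset, m B) hi]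
    have hsplit : ∀ A ∈ C'.powerset,
        (-1 : M) ^ (insert i A).card * ∑ B ∈ (insert i A).powerset, m B
        = -((-1 : M) ^ A.card * ∑ B ∈ A.powerset, m B)
          + -((-1 : M) ^ A.card * ∑ B ∈ A.powerset, m (insert i B)) := by
      intro A hA
      rw [Finset.mem_powerset] at hA
      have hiA : i ∉ A := fun h => hi (hA h)
      rw [Finset.card_insert_of_notMem hiA, insert_powerset_sum m hiA, pow_succ]
      ring
    rw [Finset.sum_congr rfl hsplit, Finset.sum_add_distrib, Finset.sum_neg_distrib,
      Finset.sum_neg_distrib]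
    rw [ih m]
    rw [ih (fun B => m (insert i B))]
    rw [Finset.card_insert_of_notMem hi, pow_succ]
    ring

/-! ### The `p`-group sum congruence -/

lemma sum_invariant_of_pgroup {p : ℕ} (hp : p.Prime) {G : Type*} [Group G] [Finite G]
    {α : Type*} [Fintype α] [DecidableEq α] [MulAction G α]
    (hG : IsPGroup p G) (f : α → ZMod p) (hf : ∀ (g : G) (x : α), f (g • x) = f x)
    (T : Finset α) (hT : ∀ x, x ∈ T ↔ ∀ g : G, g • x = x) :
    ∑ x, f x = ∑ x ∈ T, f x := by
  haveI : Fact p.Prime := ⟨hp⟩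
  have key : ∀ s : Finset α, (∀ (g : G) (x : α), x ∈ s → g • x ∈ s) →
      (∀ x ∈ s, ∃ g : G, g • x ≠ x) → ∑ x ∈ s, f x = 0 := by
    intro s
    induction s using Finset.strongInduction with
    | _ s ih =>
      intro hinv hnf
      rcases s.eq_empty_or_nonempty with rfl | ⟨x, hx⟩
      · simp
      · set O : Finset α := (Set.toFinite (MulAction.orbit G x)).toFinset with hO
        have hmemO : ∀ y, y ∈ O ↔ y ∈ MulAction.orbit G x := by
          intro y; rw [hO, Set.Finite.mem_toFinset]
        have hxO : x ∈ O := (hmemO x).mpr (MulAction.mem_orbit_self x)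
        have hOs : O ⊆ s := by
          intro y hy
          obtain ⟨g, rfl⟩ := (hmemO y).mp hy
          exact hinv g x hx
        have hcard : ∃ n : ℕ, O.card = p ^ n := by
          obtain ⟨n, hn⟩ := hG.card_orbit x
          exact ⟨n, by rw [hO, ← Set.ncard_eq_toFinset_card, ← Nat.card_coe_set_eq, hn]⟩
        have hOcast : (O.card : ZMod p) = 0 := by
          obtain ⟨n, hn⟩ := hcard
          rcases Nat.eq_zero_or_pos n with rfl | hnpos
          · exfalso
            rw [pow_zero] at hn
            obtain ⟨a, ha⟩ := Finset.card_eq_one.mp hn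
            have hax : a = x := by
              have := hxO; rw [ha, Finset.mem_singleton] at this; exact this.symm
            obtain ⟨g, hg⟩ := hnf x hx
            apply hg
            have : g • x ∈ O := (hmemO _).mpr ⟨g, rfl⟩
            rw [ha, hax, Finset.mem_singleton] at this; exact this
          · rw [hn]
            rw [ZMod.natCast_eq_zero_iff]
            exact dvd_pow_self p hnpos.ne'
        have hsumO : ∑ y ∈ O, f y = 0 := by
          have : ∀ y ∈ O, f y = f x := by
            intro y hy
            obtain ⟨g, rfl⟩ := (hmemO y).mp hy
            exact hf g x
          rw [Finset.sum_congr rfl this, Finset.sum_const, nsmul_eq_mul, hOcast, zero_mul]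
        have hsub : s \ O ⊂ s := Finset.sdiff_ssubset hOs ⟨x, hxO⟩
        have hrest : ∑ y ∈ s \ O, f y = 0 := by
          apply ih _ hsub
          · intro g y hy
            rw [Finset.mem_sdiff] at hy ⊢
            refine ⟨hinv g y hy.1, fun hmem => hy.2 ?_⟩
            obtain ⟨h, hh⟩ := (hmemO _).mp hmem
            simp only at hh
            refine (hmemO y).mpr ⟨g⁻¹ * h, ?_⟩
            show (g⁻¹ * h) • x = y
            rw [mul_smul, hh, inv_smul_smul]
          · intro y hy; exact hnf y (Finset.mem_sdiff.mp hy).1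
        calc ∑ y ∈ s, f y = ∑ y ∈ s \ O, f y + ∑ y ∈ O, f y := (Finset.sum_sdiff hOs).symm
        _ = 0 := by rw [hsumO, hrest, add_zero]
  have h2 : ∑ x ∈ Finset.univ \ T, f x = 0 := by
    apply key
    · intro g y hy
      rw [Finset.mem_sdiff] at hy ⊢
      refine ⟨Finset.mem_univ _, fun hmem => hy.2 ?_⟩
      rw [hT] at hmem ⊢
      intro g'
      have h1 := hmem (g * g' * g⁻¹)
      rw [mul_smul, mul_smul, inv_smul_smul, smul_left_cancel_iff] at h1
      exact h1
    · intro y hy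
      rw [Finset.mem_sdiff, hT] at hy
      push_neg at hy
      exact hy.2
  have h3 := Finset.sum_sdiff (Finset.subset_univ T) (f := f)
  rw [h2, zero_add] at h3
  exact h3.symm

/-! ### The action of permutations on `Sym2` -/

instance permSym2 {V : Type*} : MulAction (Equiv.Perm V) (Sym2 V) where
  smul g e := Sym2.map g e
  one_smul e := by show Sym2.map _ e = e; simp
  mul_smul g h e := by show Sym2.map _ e = Sym2.map _ (Sym2.map _ e); rw [Sym2.map_map]; rfl

lemma perm_smul_sym2 {V : Type*} (Γ : Subgroup (Equiv.Perm V)) (g : Γ) (e : Sym2 V) :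
    g • e = Sym2.map (g : Equiv.Perm V) e := rfl

lemma smul_finset_eq_image {V : Type*} [DecidableEq V] (Γ : Subgroup (Equiv.Perm V)) (g : Γ)
    (S : Finset (Sym2 V)) :
    g • S = S.image (fun e => Sym2.map (g : Equiv.Perm V) e) := by
  rw [Finset.smul_finset_def]; rfl

/-! ### Orbit lemmas -/

variable {V : Type*} {Γ : Subgroup (Equiv.Perm V)}

lemma mem_edgeOrbit_self (e : Sym2 V) : e ∈ EdgeOrbit Γ e :=
  ⟨1, Γ.one_mem, by simp⟩

lemma edgeOrbit_eq_of_mem {e f : Sym2 V} (h : f ∈ EdgeOrbit Γ e) :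
    EdgeOrbit Γ f = EdgeOrbit Γ e := by
  obtain ⟨g, hg, rfl⟩ := h
  ext x
  constructor
  · rintro ⟨h', hh', rfl⟩
    refine ⟨h' * g, Γ.mul_mem hh' hg, ?_⟩
    rw [Sym2.map_map]; rfl
  · rintro ⟨h', hh', rfl⟩
    refine ⟨h' * g⁻¹, Γ.mul_mem hh' (Γ.inv_mem hg), ?_⟩
    rw [Sym2.map_map]
    congr 1
    funext x
    simp [Equiv.Perm.mul_apply]

lemma edgeOrbits_eq_of_mem {H : SimpleGraph V} {O O' : Set (Sym2 V)}
    (hO : O ∈ EdgeOrbits Γ H) (hO' : O' ∈ EdgeOrbits Γ H) {f : Sym2 V}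
    (hf : f ∈ O) (hf' : f ∈ O') : O = O' := by
  obtain ⟨e, _, rfl⟩ := hO
  obtain ⟨e', _, rfl⟩ := hO'
  rw [← edgeOrbit_eq_of_mem hf, ← edgeOrbit_eq_of_mem hf']

lemma edgeOrbits_nonempty {H : SimpleGraph V} {O : Set (Sym2 V)}
    (hO : O ∈ EdgeOrbits Γ H) : O.Nonempty := by
  obtain ⟨e, _, rfl⟩ := hO
  exact ⟨e, mem_edgeOrbit_self e⟩

lemma edgeOrbit_smul_mem {H : SimpleGraph V} {O : Set (Sym2 V)} (hO : O ∈ EdgeOrbits Γ H)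
    (g : Γ) {e : Sym2 V} (he : e ∈ O) : Sym2.map (g : Equiv.Perm V) e ∈ O := by
  obtain ⟨e₀, _, rfl⟩ := hO
  obtain ⟨h, hh, rfl⟩ := he
  refine ⟨(g : Equiv.Perm V) * h, Γ.mul_mem g.2 hh, ?_⟩
  rw [Sym2.map_map]; rfl

lemma edgeOrbits_subset_edgeSet {H : SimpleGraph V}
    (hAut : ∀ g ∈ Γ, ∀ u v : V, H.Adj (g u) (g v) ↔ H.Adj u v)
    {O : Set (Sym2 V)} (hO : O ∈ EdgeOrbits Γ H) : O ⊆ H.edgeSet := by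
  obtain ⟨e, he, rfl⟩ := hO
  rintro f ⟨g, hg, rfl⟩
  induction e with
  | _ u v =>
    rw [Sym2.map_pair_eq]
    rw [SimpleGraph.mem_edgeSet] at he ⊢
    exact (hAut g hg u v).mpr he

end Auxiliary

section Main

open scoped Pointwise
open SimpleGraph

variable {V : Type*} [Fintype V] [DecidableEq V] {Γ : Subgroup (Equiv.Perm V)}

/-- The union of a finite family of (finite) edge sets, as a finset. -/
noncomputable def unionE (A : Finset (Set (Sym2 V))) : Finset (Sym2 V) :=
  A.biUnion (fun O => (Set.toFinite O).toFinset)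

lemma mem_unionE {A : Finset (Set (Sym2 V))} {e : Sym2 V} :
    e ∈ unionE A ↔ ∃ O ∈ A, e ∈ O := by
  simp [unionE, Set.Finite.mem_toFinset]

/-- The finset of orbits. -/
noncomputable def orbFinset (Γ : Subgroup (Equiv.Perm V)) (H : SimpleGraph V) :
    Finset (Set (Sym2 V)) :=
  (Set.toFinite (EdgeOrbits Γ H)).toFinset

lemma mem_orbFinset {H : SimpleGraph V} {O : Set (Sym2 V)} :
    O ∈ orbFinset Γ H ↔ O ∈ EdgeOrbits Γ H :=
  Set.Finite.mem_toFinset _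

lemma unionE_subset_edgeSet {H : SimpleGraph V}
    (hAut : ∀ g ∈ Γ, ∀ u v : V, H.Adj (g u) (g v) ↔ H.Adj u v)
    {A : Finset (Set (Sym2 V))} (hA : A ⊆ orbFinset Γ H) :
    ↑(unionE A) ⊆ H.edgeSet := by
  intro e he
  rw [Finset.mem_coe, mem_unionE] at he
  obtain ⟨O, hO, heO⟩ := he
  exact edgeOrbits_subset_edgeSet hAut (mem_orbFinset.mp (hA hO)) heO

lemma edgeSet_fromEdgeSet_of_subset {H : SimpleGraph V} {s : Set (Sym2 V)}
    (hs : s ⊆ H.edgeSet) : (SimpleGraph.fromEdgeSet s).edgeSet = s := by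
  rw [SimpleGraph.edgeSet_fromEdgeSet]
  ext e
  simp only [Set.mem_diff, Set.mem_setOf_eq]
  exact ⟨fun h => h.1, fun h => ⟨h, H.not_isDiag_of_mem_edgeSet (hs h)⟩⟩

lemma edgeFinset_fromEdgeSet_of_subset {H : SimpleGraph V} {S : Finset (Sym2 V)}
    (hs : ↑S ⊆ H.edgeSet) :
    (SimpleGraph.fromEdgeSet (S : Set (Sym2 V))).edgeFinset = S := by
  apply Finset.coe_injective
  rw [SimpleGraph.coe_edgeFinset, edgeSet_fromEdgeSet_of_subset hs]

lemma smul_unionE {H : SimpleGraph V} {A : Finset (Set (Sym2 V))}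
    (hA : A ⊆ orbFinset Γ H) (g : Γ) : g • unionE A = unionE A := by
  apply Finset.eq_of_subset_of_card_le
  · intro e he
    rw [smul_finset_eq_image] at he
    obtain ⟨f, hf, rfl⟩ := Finset.mem_image.mp he
    rw [mem_unionE] at hf ⊢
    obtain ⟨O, hO, hfO⟩ := hf
    exact ⟨O, hO, edgeOrbit_smul_mem (mem_orbFinset.mp (hA hO)) g hfO⟩
  · exact le_of_eq (Finset.card_smul_finset g _).symm

lemma unionE_mono {A B : Finset (Set (Sym2 V))} (h : A ⊆ B) : unionE A ⊆ unionE B := by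
  intro e he
  rw [mem_unionE] at he ⊢
  obtain ⟨O, hO, heO⟩ := he
  exact ⟨O, h hO, heO⟩

lemma fixed_subset_eq_unionE {H : SimpleGraph V} {A : Finset (Set (Sym2 V))}
    (hA : A ⊆ orbFinset Γ H) {S : Finset (Sym2 V)} (hS : S ⊆ unionE A)
    (hfix : ∀ g : Γ, g • S = S) :
    unionE (A.filter (fun O => (Set.toFinite O).toFinset ⊆ S)) = S := by
  apply Finset.Subset.antisymm
  · intro e he
    obtain ⟨O, hO, heO⟩ := mem_unionE.mp he
    rw [Finset.mem_filter] at hO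
    exact hO.2 ((Set.Finite.mem_toFinset _).mpr heO)
  · intro e he
    obtain ⟨O, hO, heO⟩ := mem_unionE.mp (hS he)
    refine mem_unionE.mpr ⟨O, Finset.mem_filter.mpr ⟨hO, ?_⟩, heO⟩
    intro f hf
    rw [Set.Finite.mem_toFinset] at hf
    have hOe : O = EdgeOrbit Γ e := by
      obtain ⟨e₀, _, rfl⟩ := mem_orbFinset.mp (hA hO)
      exact (edgeOrbit_eq_of_mem heO).symm
    rw [hOe] at hf
    obtain ⟨g, hg, rfl⟩ := hf
    have hmem : (⟨g, hg⟩ : Γ) • e ∈ (⟨g, hg⟩ : Γ) • S := Finset.smul_mem_smul_finset he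
    rw [hfix ⟨g, hg⟩] at hmem
    exact hmem

lemma isFixedPoint_unionE {H : SimpleGraph V}
    (hAut : ∀ g ∈ Γ, ∀ u v : V, H.Adj (g u) (g v) ↔ H.Adj u v)
    {A : Finset (Set (Sym2 V))} (hA : A ⊆ orbFinset Γ H) :
    IsFixedPoint Γ H (SimpleGraph.fromEdgeSet (↑(unionE A) : Set (Sym2 V))) := by
  have hsub := unionE_subset_edgeSet hAut hA
  constructor
  · calc SimpleGraph.fromEdgeSet (↑(unionE A) : Set (Sym2 V))
        ≤ SimpleGraph.fromEdgeSet H.edgeSet := SimpleGraph.fromEdgeSet_mono hsub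
    _ = H := H.fromEdgeSet_edgeSet
  · intro g hg
    rw [edgeSet_fromEdgeSet_of_subset hsub]
    have h := smul_unionE hA ⟨g, hg⟩
    rw [smul_finset_eq_image] at h
    calc Sym2.map g '' ↑(unionE A)
        = ↑((unionE A).image (fun e => Sym2.map g e)) := (Finset.coe_image).symm
    _ = ↑(unionE A) := by rw [h]

lemma level_unionE {H : SimpleGraph V}
    (hAut : ∀ g ∈ Γ, ∀ u v : V, H.Adj (g u) (g v) ↔ H.Adj u v)
    {A : Finset (Set (Sym2 V))} (hA : A ⊆ orbFinset Γ H) :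
    level Γ H (SimpleGraph.fromEdgeSet (↑(unionE A) : Set (Sym2 V))) = A.card := by
  rw [level, edgeSet_fromEdgeSet_of_subset (unionE_subset_edgeSet hAut hA)]
  have hset : {O | O ∈ EdgeOrbits Γ H ∧ O ⊆ ↑(unionE A)} = ↑A := by
    ext O
    simp only [Set.mem_setOf_eq, Finset.mem_coe]
    constructor
    · rintro ⟨hOorb, hOsub⟩
      obtain ⟨e, he⟩ := edgeOrbits_nonempty hOorb
      have hin : e ∈ unionE A := hOsub he
      obtain ⟨O', hO', heO'⟩ := mem_unionE.mp hin
      rwa [edgeOrbits_eq_of_mem hOorb (mem_orbFinset.mp (hA hO')) he heO']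
    · intro hO
      refine ⟨mem_orbFinset.mp (hA hO), fun e he => ?_⟩
      exact Finset.mem_coe.mpr (mem_unionE.mpr ⟨O, hO, he⟩)
  rw [hset, Set.ncard_coe_finset]

lemma phi_smul_iff {Φ : SimpleGraph V → Prop}
    (hΦiso : ∀ A B : SimpleGraph V, Nonempty (A ≃g B) → (Φ A ↔ Φ B))
    (g : Γ) (S : Finset (Sym2 V)) :
    Φ (SimpleGraph.fromEdgeSet (↑(g • S) : Set (Sym2 V)))
      ↔ Φ (SimpleGraph.fromEdgeSet (↑S : Set (Sym2 V))) := by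
  refine (hΦiso _ _ ⟨RelIso.mk (g : Equiv.Perm V) ?_⟩).symm
  intro a b
  simp only [SimpleGraph.fromEdgeSet_adj, Finset.mem_coe]
  have hmem : s((g : Equiv.Perm V) a, (g : Equiv.Perm V) b) ∈ g • S ↔ s(a, b) ∈ S := by
    have heq : s((g : Equiv.Perm V) a, (g : Equiv.Perm V) b) = g • s(a, b) := by
      rw [perm_smul_sym2, Sym2.map_pair_eq]
    rw [heq, Finset.smul_mem_smul_finset_iff]
  rw [hmem]
  have hne : (g : Equiv.Perm V) a ≠ (g : Equiv.Perm V) b ↔ a ≠ b :=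
    not_congr (Equiv.apply_eq_iff_eq _)
  rw [hne]

lemma mem_edgeFinset' {V' : Type*} {G : SimpleGraph V'} {inst : Fintype G.edgeSet}
    {e : Sym2 V'} : e ∈ @SimpleGraph.edgeFinset V' G inst ↔ e ∈ G.edgeSet :=
  Set.mem_toFinset

lemma altEnum_eq_sum {Φ : SimpleGraph V → Prop} {S : Finset (Sym2 V)} {H : SimpleGraph V}
    (hs : ↑S ⊆ H.edgeSet) :
    altEnum Φ (SimpleGraph.fromEdgeSet (S : Set (Sym2 V)))
      = ∑ T ∈ S.powerset,
          if Φ (SimpleGraph.fromEdgeSet (T : Set (Sym2 V))) then (-1 : ℤ) ^ T.card else 0 := by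
  rw [altEnum]
  refine Finset.sum_congr ?_ (fun T _ => rfl)
  ext T
  simp only [Finset.mem_powerset]
  constructor
  · intro h e he
    have h2 := h he
    rw [mem_edgeFinset', edgeSet_fromEdgeSet_of_subset hs] at h2
    exact h2
  · intro h e he
    rw [mem_edgeFinset', edgeSet_fromEdgeSet_of_subset hs]
    exact h he

set_option maxHeartbeats 2000000 in
lemma key_congruence {p : ℕ} (hp : p.Prime) {H : SimpleGraph V}
    (hAut : ∀ g ∈ Γ, ∀ u v : V, H.Adj (g u) (g v) ↔ H.Adj u v)
    (hΓ : IsPGroup p Γ) {Φ : SimpleGraph V → Prop}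
    (hΦiso : ∀ A B : SimpleGraph V, Nonempty (A ≃g B) → (Φ A ↔ Φ B))
    {A : Finset (Set (Sym2 V))} (hA : A ⊆ orbFinset Γ H) :
    ((altEnum Φ (SimpleGraph.fromEdgeSet (↑(unionE A) : Set (Sym2 V))) : ℤ) : ZMod p)
      = ∑ B ∈ A.powerset,
          (if Φ (SimpleGraph.fromEdgeSet (↑(unionE B) : Set (Sym2 V)))
           then (-1 : ZMod p) ^ (unionE B).card else 0) := by
  classical
  set w : Finset (Sym2 V) → ZMod p :=
    fun S => if Φ (SimpleGraph.fromEdgeSet (↑S : Set (Sym2 V)))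
             then (-1 : ZMod p) ^ S.card else 0 with hw
  set f : Finset (Sym2 V) → ZMod p := fun S => if S ⊆ unionE A then w S else 0 with hf
  set T : Finset (Finset (Sym2 V)) :=
    Finset.univ.filter (fun S : Finset (Sym2 V) => ∀ g : Γ, g • S = S) with hTdef
  have hT : ∀ S : Finset (Sym2 V), S ∈ T ↔ ∀ g : Γ, g • S = S := by
    intro S
    rw [hTdef, Finset.mem_filter]
    simp only [Finset.mem_univ, true_and]
  have h1 : ((altEnum Φ (SimpleGraph.fromEdgeSet (↑(unionE A) : Set (Sym2 V))) : ℤ) : ZMod p)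
      = ∑ S ∈ (unionE A).powerset, w S := by
    rw [altEnum_eq_sum (unionE_subset_edgeSet hAut hA), Int.cast_sum]
    refine Finset.sum_congr rfl (fun S _ => ?_)
    rw [hw]
    simp only
    split_ifs
    · push_cast; ring
    · exact Int.cast_zero
  have hps : (unionE A).powerset = Finset.univ.filter (fun S => S ⊆ unionE A) := by
    ext S; simp [Finset.mem_powerset]
  have h2 : ∑ S : Finset (Sym2 V), f S = ∑ S ∈ (unionE A).powerset, w S := by
    rw [hps, Finset.sum_filter]
  have hfinv : ∀ (g : Γ) (S : Finset (Sym2 V)), f (g • S) = f S := by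
    intro g S
    have hsubiff : g • S ⊆ unionE A ↔ S ⊆ unionE A := by
      conv_lhs => rw [← smul_unionE hA g]
      exact Finset.smul_finset_subset_smul_finset_iff
    have hwz : w (g • S) = w S := by
      rw [hw]
      simp only
      rw [Finset.card_smul_finset]
      by_cases hphi : Φ (SimpleGraph.fromEdgeSet (↑S : Set (Sym2 V)))
      · rw [if_pos hphi, if_pos ((phi_smul_iff hΦiso g S).mpr hphi)]
      · rw [if_neg hphi, if_neg (fun h => hphi ((phi_smul_iff hΦiso g S).mp h))]
    rw [hf]
    simp only
    by_cases hsub : S ⊆ unionE A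
    · rw [if_pos hsub, if_pos (hsubiff.mpr hsub), hwz]
    · rw [if_neg hsub, if_neg (fun h => hsub (hsubiff.mp h))]
  have h3 := sum_invariant_of_pgroup hp hΓ f hfinv T hT
  have h4 : ∑ S ∈ T, f S = ∑ S ∈ T.filter (fun S => S ⊆ unionE A), w S := by
    simp only [hf]
    exact (Finset.sum_filter _ _).symm
  have h5 : ∑ B ∈ A.powerset,
        (if Φ (SimpleGraph.fromEdgeSet (↑(unionE B) : Set (Sym2 V)))
         then (-1 : ZMod p) ^ (unionE B).card else 0)
      = ∑ S ∈ T.filter (fun S => S ⊆ unionE A), w S := by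
    apply Finset.sum_bij' (i := fun B _ => unionE B)
      (j := fun S _ => A.filter (fun O => (Set.toFinite O).toFinset ⊆ S))
    · intro B hB
      rw [Finset.mem_powerset] at hB
      refine Finset.mem_filter.mpr ⟨(hT _).mpr ?_, ?_⟩
      · exact fun g => smul_unionE (hB.trans hA) g
      · exact unionE_mono hB
    · intro S hS
      rw [Finset.mem_powerset]
      exact Finset.filter_subset _ _
    · -- left inverse : j (i B) = B
      intro B hB
      rw [Finset.mem_powerset] at hB
      apply Finset.Subset.antisymm
      · intro O hO
        rw [Finset.mem_filter] at hO
        obtain ⟨hOA, hOsub⟩ := hO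
        have hOorb := mem_orbFinset.mp (hA hOA)
        obtain ⟨e, he⟩ := edgeOrbits_nonempty hOorb
        have hin : e ∈ unionE B := hOsub ((Set.Finite.mem_toFinset _).mpr he)
        obtain ⟨O', hO', heO'⟩ := mem_unionE.mp hin
        rwa [edgeOrbits_eq_of_mem hOorb (mem_orbFinset.mp (hA (hB hO'))) he heO']
      · intro O hO
        refine Finset.mem_filter.mpr ⟨hB hO, ?_⟩
        intro e he
        rw [Set.Finite.mem_toFinset] at he
        exact mem_unionE.mpr ⟨O, hO, he⟩
    · -- right inverse : i (j S) = S
      intro S hS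
      rw [Finset.mem_filter] at hS
      exact fixed_subset_eq_unionE hA hS.2 ((hT _).mp hS.1)
    · intro B hB
      rfl
  rw [h1, ← h2, h3]
  exact h4.trans h5.symm


end Main

theorem stmt_6 {V : Type*} [Fintype V] [DecidableEq V]
    (H : SimpleGraph V) (p : ℕ) (hp : p.Prime)
    (Γ : Subgroup (Equiv.Perm V))
    (hAut : ∀ g ∈ Γ, ∀ u v : V, H.Adj (g u) (g v) ↔ H.Adj u v)
    (hΓ : IsPGroup p Γ)
    (Φ : SimpleGraph V → Prop)
    (hΦiso : ∀ A B : SimpleGraph V, Nonempty (A ≃g B) → (Φ A ↔ Φ B))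
    (c : ℕ) (hc : c < (EdgeOrbits Γ H).ncard)
    (hempty : Φ ⊥)
    (hhigh : ∀ F : SimpleGraph V, IsFixedPoint Γ H F →
      (EdgeOrbits Γ H).ncard - c < level Γ H F → ¬ Φ F) :
    ∃ S : SimpleGraph V, IsFixedPoint Γ H S ∧
      ¬ (altEnum Φ S ≡ 0 [ZMOD p]) ∧ c ≤ level Γ H S := by
  classical
  haveI : Fact p.Prime := ⟨hp⟩
  by_contra hcon
  set 𝒪 := orbFinset Γ H with h𝒪
  have hLncard : (EdgeOrbits Γ H).ncard = 𝒪.card := Set.ncard_eq_toFinset_card _ _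
  have hall : ∀ A ⊆ 𝒪, c ≤ A.card →
      ((altEnum Φ (SimpleGraph.fromEdgeSet (↑(unionE A) : Set (Sym2 V))) : ℤ) : ZMod p) = 0 := by
    intro A hA hcA
    by_contra hne
    apply hcon
    refine ⟨_, isFixedPoint_unionE hAut hA, ?_, ?_⟩
    · intro hmod
      apply hne
      have h := (ZMod.intCast_eq_intCast_iff _ _ _).mpr hmod
      simpa using h
    · rw [level_unionE hAut hA]; exact hcA
  set m : Finset (Set (Sym2 V)) → ZMod p := fun B =>
    if Φ (SimpleGraph.fromEdgeSet (↑(unionE B) : Set (Sym2 V)))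
    then (-1 : ZMod p) ^ (unionE B).card else 0 with hm
  have hkey : ∀ A ⊆ 𝒪,
      ((altEnum Φ (SimpleGraph.fromEdgeSet (↑(unionE A) : Set (Sym2 V))) : ℤ) : ZMod p)
        = ∑ B ∈ A.powerset, m B :=
    fun A hA => key_congruence hp hAut hΓ hΦiso hA
  have hm0 : m ∅ = 1 := by
    rw [hm]
    simp only [unionE, Finset.biUnion_empty, Finset.coe_empty,
      SimpleGraph.fromEdgeSet_empty, Finset.card_empty, pow_zero]
    rw [if_pos hempty]
  have hmhigh : ∀ B ⊆ 𝒪, 𝒪.card - c < B.card → m B = 0 := by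
    intro B hB hBcard
    rw [hm]
    simp only
    rw [if_neg]
    apply hhigh _ (isFixedPoint_unionE hAut hB)
    rw [level_unionE hAut hB, hLncard]
    exact hBcard
  rcases Nat.eq_zero_or_pos c with rfl | hcpos
  · have h0 := hall ∅ (Finset.empty_subset _) (Nat.le_refl 0)
    rw [hkey ∅ (Finset.empty_subset _), Finset.powerset_empty, Finset.sum_singleton, hm0] at h0
    exact one_ne_zero h0
  · set u : Finset (Set (Sym2 V)) → ZMod p :=
      fun A => (-1 : ZMod p) ^ A.card * ∑ B ∈ A.powerset, m B with hu
    have hmoeb : ∀ C : Finset (Set (Sym2 V)), ∑ A ∈ C.powerset, u A = (-1 : ZMod p) ^ C.card * m C := by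
      intro C
      rw [hu]
      exact moebius C m
    have hs : ∀ A ⊆ 𝒪, c - 1 < A.card → u A = 0 := by
      intro A hA hAcard
      rw [hu]
      simp only
      rw [← hkey A hA, hall A hA (by omega), mul_zero]
    have hv : ∀ B ⊆ 𝒪, 𝒪.card - (c - 1) ≤ B.card → ∑ A ∈ B.powerset, u A = 0 := by
      intro B hB hBcard
      rw [hmoeb]
      rw [hmhigh B hB (by rw [hLncard] at hc; omega), mul_zero]
    have hzero := polyZero (c - 1) 𝒪 u hs hv ∅ (Finset.empty_subset _)
    rw [hmoeb ∅, Finset.card_empty, pow_zero, one_mul, hm0] at hzero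
    exact one_ne_zero hzero
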